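/- Let v, w : Ω → ℝ be bounded measurable functions on a measure space (Ω, λ) of finite measure, and let χ : Ω → [0,1] be measurable with ∫ χ e^w dλ > 0. Define probability densities p_v = χe^v / ∫χe^v dλ and p_w = χe^w / ∫χe^w dλ. Then the Hellinger distance satisfies d_H(p_v, p_w) ≤ ‖v − w‖_∞ · e^{‖v−w‖_∞/2}. -/

import Mathlib

open MeasureTheory

lemma sqrt_exp_aux (t : ℝ) : Real.sqrt (Real.exp t) = Real.exp (t / 2) := by
  rw [show Real.exp t = (Real.exp (t / 2)) ^ 2 by
    rw [sq, ← Real.exp_add]; ring_nf]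
  exact Real.sqrt_sq (Real.exp_nonneg _)

lemma abs_exp_sub_one_le_aux (t : ℝ) : |Real.exp t - 1| ≤ |t| * Real.exp |t| := by
  rcases le_or_gt 0 t with h | h
  · rw [abs_of_nonneg h, abs_of_nonneg (by linarith [Real.one_le_exp h])]
    have h1 : 1 + (-t) ≤ Real.exp (-t) := by linarith [Real.add_one_le_exp (-t)]
    have h2 : Real.exp t - 1 = Real.exp t * (1 - Real.exp (-t)) := by
      have ht : t + -t = 0 := by ring
      rw [mul_sub, mul_one, ← Real.exp_add, ht, Real.exp_zero]
    rw [h2]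
    calc Real.exp t * (1 - Real.exp (-t)) ≤ Real.exp t * t := by
          apply mul_le_mul_of_nonneg_left (by linarith) (Real.exp_nonneg _)
      _ = t * Real.exp t := by ring
  · rw [abs_of_neg h, abs_of_nonpos (by linarith [Real.exp_lt_one_iff.mpr h])]
    have h1 : 1 + t ≤ Real.exp t := by linarith [Real.add_one_le_exp t]
    have h2 : (1 : ℝ) ≤ Real.exp (-t) := Real.one_le_exp (by linarith)
    nlinarith

/-- L2 norm of an Lp element with a.e. representative `f`. -/
lemma l2_norm_eq_aux {Ω : Type*} [MeasurableSpace Ω] {μ : Measure Ω}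
    (g : Lp ℝ 2 μ) (f : Ω → ℝ) (h : ∀ᵐ x ∂μ, g x = f x) :
    ‖g‖ = Real.sqrt (∫ x, f x * f x ∂μ) := by
  have h1 : (inner ℝ g g : ℝ) = ∫ x, f x * f x ∂μ := by
    rw [MeasureTheory.L2.inner_def]
    refine integral_congr_ae ?_
    filter_upwards [h] with x hx
    simp [RCLike.inner_apply, hx]
    ring
  rw [← h1, real_inner_self_eq_norm_sq]
  exact (Real.sqrt_sq (norm_nonneg _)).symm

set_option maxHeartbeats 1000000 in
/-- Hellinger distance bound for normalized exponential densities: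
`d_H(p_v, p_w) ≤ ‖v − w‖_∞ e^{‖v−w‖_∞/2}`. -/
theorem hellinger_bound_exponential_densities
    {Ω : Type*} [MeasurableSpace Ω] (lam : Measure Ω) [IsFiniteMeasure lam]
    (v w χ : Ω → ℝ) (hv : Measurable v) (hw : Measurable w) (hχ : Measurable χ)
    (hvB : ∃ C, ∀ x, |v x| ≤ C) (hwB : ∃ C, ∀ x, |w x| ≤ C)
    (hχ01 : ∀ x, χ x ∈ Set.Icc (0 : ℝ) 1)
    (hposv : 0 < ∫ x, χ x * Real.exp (v x) ∂lam)
    (hposw : 0 < ∫ x, χ x * Real.exp (w x) ∂lam)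
    (M : ℝ) (hM : ∀ x, |v x - w x| ≤ M) :
    Real.sqrt (∫ x,
        (Real.sqrt (χ x * Real.exp (v x) / ∫ y, χ y * Real.exp (v y) ∂lam) -
         Real.sqrt (χ x * Real.exp (w x) / ∫ y, χ y * Real.exp (w y) ∂lam)) ^ 2 ∂lam)
      ≤ M * Real.exp (M / 2) := by
  obtain ⟨Cv, hCv⟩ := hvB
  obtain ⟨Cw, hCw⟩ := hwB
  set Zv : ℝ := ∫ y, χ y * Real.exp (v y) ∂lam with hZv
  set Zw : ℝ := ∫ y, χ y * Real.exp (w y) ∂lam with hZw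
  -- M nonneg
  have hΩ : Nonempty Ω := by
    rcases isEmpty_or_nonempty Ω with h | h
    · exfalso
      have : Zv = 0 := by rw [hZv]; exact MeasureTheory.integral_of_isEmpty
      linarith
    · exact h
  have hM0 : 0 ≤ M := le_trans (abs_nonneg _) (hM (Classical.arbitrary Ω))
  -- the a, b functions
  set a : Ω → ℝ := fun x => Real.sqrt (χ x) * Real.exp (v x / 2) with ha
  set b : Ω → ℝ := fun x => Real.sqrt (χ x) * Real.exp (w x / 2) with hb
  have hχ0 : ∀ x, 0 ≤ χ x := fun x => (hχ01 x).1
  have hχ1 : ∀ x, χ x ≤ 1 := fun x => (hχ01 x).2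
  have hsχ1 : ∀ x, Real.sqrt (χ x) ≤ 1 := fun x => by
    calc Real.sqrt (χ x) ≤ Real.sqrt 1 := Real.sqrt_le_sqrt (hχ1 x)
      _ = 1 := Real.sqrt_one
  have hmeas_a : Measurable a := (hχ.sqrt).mul ((hv.div_const 2).exp)
  have hmeas_b : Measurable b := (hχ.sqrt).mul ((hw.div_const 2).exp)
  have hbound_a : ∀ x, ‖a x‖ ≤ Real.exp (Cv / 2) := by
    intro x
    rw [Real.norm_eq_abs, ha, abs_of_nonneg (mul_nonneg (Real.sqrt_nonneg _) (Real.exp_nonneg _))]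
    calc Real.sqrt (χ x) * Real.exp (v x / 2) ≤ 1 * Real.exp (v x / 2) :=
          mul_le_mul_of_nonneg_right (hsχ1 x) (Real.exp_nonneg _)
      _ = Real.exp (v x / 2) := one_mul _
      _ ≤ Real.exp (Cv / 2) := Real.exp_le_exp.mpr (by
          have := abs_le.mp (hCv x); linarith [this.2])
  have hbound_b : ∀ x, ‖b x‖ ≤ Real.exp (Cw / 2) := by
    intro x
    rw [Real.norm_eq_abs, hb, abs_of_nonneg (mul_nonneg (Real.sqrt_nonneg _) (Real.exp_nonneg _))]
    calc Real.sqrt (χ x) * Real.exp (w x / 2) ≤ 1 * Real.exp (w x / 2) :=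
          mul_le_mul_of_nonneg_right (hsχ1 x) (Real.exp_nonneg _)
      _ = Real.exp (w x / 2) := one_mul _
      _ ≤ Real.exp (Cw / 2) := Real.exp_le_exp.mpr (by
          have := abs_le.mp (hCw x); linarith [this.2])
  have hA : MemLp a 2 lam :=
    MemLp.of_bound hmeas_a.aestronglyMeasurable _ (Filter.Eventually.of_forall hbound_a)
  have hB : MemLp b 2 lam :=
    MemLp.of_bound hmeas_b.aestronglyMeasurable _ (Filter.Eventually.of_forall hbound_b)
  set A : Lp ℝ 2 lam := hA.toLp a with hAdef
  set B : Lp ℝ 2 lam := hB.toLp b with hBdef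
  -- norms of A and B
  have h_a_sq : ∀ x, a x * a x = χ x * Real.exp (v x) := by
    intro x
    rw [ha]
    have : Real.sqrt (χ x) * Real.sqrt (χ x) = χ x := Real.mul_self_sqrt (hχ0 x)
    have he : Real.exp (v x / 2) * Real.exp (v x / 2) = Real.exp (v x) := by
      rw [← Real.exp_add]; ring_nf
    calc (Real.sqrt (χ x) * Real.exp (v x / 2)) * (Real.sqrt (χ x) * Real.exp (v x / 2))
        = (Real.sqrt (χ x) * Real.sqrt (χ x)) * (Real.exp (v x / 2) * Real.exp (v x / 2)) := by ring
      _ = χ x * Real.exp (v x) := by rw [this, he]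
  have h_b_sq : ∀ x, b x * b x = χ x * Real.exp (w x) := by
    intro x
    rw [hb]
    have : Real.sqrt (χ x) * Real.sqrt (χ x) = χ x := Real.mul_self_sqrt (hχ0 x)
    have he : Real.exp (w x / 2) * Real.exp (w x / 2) = Real.exp (w x) := by
      rw [← Real.exp_add]; ring_nf
    calc (Real.sqrt (χ x) * Real.exp (w x / 2)) * (Real.sqrt (χ x) * Real.exp (w x / 2))
        = (Real.sqrt (χ x) * Real.sqrt (χ x)) * (Real.exp (w x / 2) * Real.exp (w x / 2)) := by ring
      _ = χ x * Real.exp (w x) := by rw [this, he]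
  have hnA : ‖A‖ = Real.sqrt Zv := by
    rw [l2_norm_eq_aux A a (hA.coeFn_toLp)]
    congr 1
    rw [hZv]
    exact integral_congr_ae (Filter.Eventually.of_forall fun x => h_a_sq x)
  have hnB : ‖B‖ = Real.sqrt Zw := by
    rw [l2_norm_eq_aux B b (hB.coeFn_toLp)]
    congr 1
    rw [hZw]
    exact integral_congr_ae (Filter.Eventually.of_forall fun x => h_b_sq x)
  have hsZv : 0 < Real.sqrt Zv := Real.sqrt_pos.mpr hposv
  have hsZw : 0 < Real.sqrt Zw := Real.sqrt_pos.mpr hposw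
  set c1 : ℝ := (Real.sqrt Zv)⁻¹ with hc1
  set c2 : ℝ := (Real.sqrt Zw)⁻¹ with hc2
  -- the Hellinger integrand equals the representative of c1•A - c2•B squared
  have hpt : ∀ x,
      (Real.sqrt (χ x * Real.exp (v x) / Zv) - Real.sqrt (χ x * Real.exp (w x) / Zw)) ^ 2
        = (c1 * a x - c2 * b x) * (c1 * a x - c2 * b x) := by
    intro x
    have h1 : Real.sqrt (χ x * Real.exp (v x) / Zv) = c1 * a x := by
      rw [Real.sqrt_div (mul_nonneg (hχ0 x) (Real.exp_nonneg _)),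
        Real.sqrt_mul (hχ0 x), sqrt_exp_aux, hc1, ha]
      field_simp
    have h2 : Real.sqrt (χ x * Real.exp (w x) / Zw) = c2 * b x := by
      rw [Real.sqrt_div (mul_nonneg (hχ0 x) (Real.exp_nonneg _)),
        Real.sqrt_mul (hχ0 x), sqrt_exp_aux, hc2, hb]
      field_simp
    rw [h1, h2]; ring
  have hX : ∀ᵐ x ∂lam, (c1 • A - c2 • B) x = c1 * a x - c2 * b x := by
    filter_upwards [Lp.coeFn_sub (c1 • A) (c2 • B), Lp.coeFn_smul c1 A, Lp.coeFn_smul c2 B,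
      hA.coeFn_toLp, hB.coeFn_toLp] with x h1 h2 h3 h4 h5
    rw [← hAdef] at h4; rw [← hBdef] at h5
    simp only [h1, Pi.sub_apply, h2, h3, Pi.smul_apply, smul_eq_mul, h4, h5]
  have hLHS : Real.sqrt (∫ x,
      (Real.sqrt (χ x * Real.exp (v x) / Zv) - Real.sqrt (χ x * Real.exp (w x) / Zw)) ^ 2 ∂lam)
      = ‖c1 • A - c2 • B‖ := by
    rw [l2_norm_eq_aux (c1 • A - c2 • B) (fun x => c1 * a x - c2 * b x) hX]
    congr 1
    exact integral_congr_ae (Filter.Eventually.of_forall fun x => hpt x)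
  rw [hLHS]
  -- bound ‖A - B‖
  have hAB : ‖A - B‖ = Real.sqrt (∫ x, (a x - b x) * (a x - b x) ∂lam) := by
    apply l2_norm_eq_aux
    filter_upwards [Lp.coeFn_sub A B, hA.coeFn_toLp, hB.coeFn_toLp] with x h1 h2 h3
    rw [h1, Pi.sub_apply, hAdef, hBdef, h2, h3]
  set K : ℝ := M / 2 * Real.exp (M / 2) with hK
  have hK0 : 0 ≤ K := mul_nonneg (by linarith) (Real.exp_nonneg _)
  have hptAB : ∀ x, (a x - b x) * (a x - b x) ≤ K ^ 2 * (χ x * Real.exp (w x)) := by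
    intro x
    have hs : |(v x - w x) / 2| ≤ M / 2 := by
      rw [abs_div]
      have := hM x
      simp only [abs_of_pos (by norm_num : (0:ℝ) < 2)]
      linarith
    have hev : Real.exp (v x / 2) = Real.exp (w x / 2) * Real.exp ((v x - w x) / 2) := by
      rw [← Real.exp_add]; ring_nf
    have hkey : |Real.exp ((v x - w x) / 2) - 1| ≤ K := by
      calc |Real.exp ((v x - w x) / 2) - 1|
          ≤ |(v x - w x) / 2| * Real.exp |(v x - w x) / 2| := abs_exp_sub_one_le_aux _
        _ ≤ (M / 2) * Real.exp (M / 2) := by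
            apply mul_le_mul hs (Real.exp_le_exp.mpr hs) (Real.exp_nonneg _) (by linarith)
        _ = K := rfl
    have h1 : a x - b x = b x * (Real.exp ((v x - w x) / 2) - 1) := by
      simp only [ha, hb]
      rw [hev]; ring
    have h2 : (a x - b x) * (a x - b x)
        = χ x * Real.exp (w x) * (Real.exp ((v x - w x) / 2) - 1) ^ 2 := by
      rw [h1, ← h_b_sq x]; ring
    rw [h2]
    have h3 : (Real.exp ((v x - w x) / 2) - 1) ^ 2 ≤ K ^ 2 := by
      rw [← sq_abs]
      exact pow_le_pow_left₀ (abs_nonneg _) hkey 2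
    have h4 : 0 ≤ χ x * Real.exp (w x) := mul_nonneg (hχ0 x) (Real.exp_nonneg _)
    nlinarith
  have hint_ab : Integrable (fun x => (a x - b x) * (a x - b x)) lam := by
    rw [← memLp_one_iff_integrable]
    apply MemLp.of_bound ((hmeas_a.sub hmeas_b).mul (hmeas_a.sub hmeas_b)).aestronglyMeasurable
      ((Real.exp (Cv / 2) + Real.exp (Cw / 2)) ^ 2)
    apply Filter.Eventually.of_forall
    intro x
    rw [Real.norm_eq_abs, Pi.mul_apply, Pi.sub_apply, abs_mul, ← sq]
    apply pow_le_pow_left₀ (abs_nonneg _)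
    calc |a x - b x| ≤ |a x| + |b x| := abs_sub _ _
      _ ≤ Real.exp (Cv / 2) + Real.exp (Cw / 2) := add_le_add (hbound_a x) (hbound_b x)
  have hint_w : Integrable (fun x => χ x * Real.exp (w x)) lam := by
    rw [← memLp_one_iff_integrable]
    apply MemLp.of_bound (hχ.mul hw.exp).aestronglyMeasurable (Real.exp Cw)
    apply Filter.Eventually.of_forall
    intro x
    rw [Real.norm_eq_abs, Pi.mul_apply, abs_of_nonneg (mul_nonneg (hχ0 x) (Real.exp_nonneg _))]
    calc χ x * Real.exp (w x) ≤ 1 * Real.exp (w x) :=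
          mul_le_mul_of_nonneg_right (hχ1 x) (Real.exp_nonneg _)
      _ = Real.exp (w x) := one_mul _
      _ ≤ Real.exp Cw := Real.exp_le_exp.mpr (by have := abs_le.mp (hCw x); linarith [this.2])
  have hABle : ‖A - B‖ ≤ K * Real.sqrt Zw := by
    rw [hAB]
    have hintle : ∫ x, (a x - b x) * (a x - b x) ∂lam ≤ K ^ 2 * Zw := by
      calc ∫ x, (a x - b x) * (a x - b x) ∂lam
          ≤ ∫ x, K ^ 2 * (χ x * Real.exp (w x)) ∂lam :=
            integral_mono hint_ab (hint_w.const_mul _) hptAB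
        _ = K ^ 2 * Zw := by rw [integral_const_mul, hZw]
    calc Real.sqrt (∫ x, (a x - b x) * (a x - b x) ∂lam)
        ≤ Real.sqrt (K ^ 2 * Zw) := Real.sqrt_le_sqrt hintle
      _ = K * Real.sqrt Zw := by
          rw [Real.sqrt_mul (sq_nonneg _), Real.sqrt_sq hK0]
  -- vector decomposition
  have hc2pos : (0:ℝ) < c2 := by rw [hc2]; exact inv_pos.mpr hsZw
  have hdecomp : c1 • A - c2 • B = c2 • (A - B) + (c1 - c2) • A := by
    rw [smul_sub, sub_smul]; abel
  have htri : ‖c1 • A - c2 • B‖ ≤ c2 * ‖A - B‖ + |c1 - c2| * ‖A‖ := by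
    rw [hdecomp]
    calc ‖c2 • (A - B) + (c1 - c2) • A‖ ≤ ‖c2 • (A - B)‖ + ‖(c1 - c2) • A‖ := norm_add_le _ _
      _ = c2 * ‖A - B‖ + |c1 - c2| * ‖A‖ := by
          rw [norm_smul, norm_smul, Real.norm_eq_abs, Real.norm_eq_abs,
            abs_of_pos hc2pos]
  have hc1c2 : |c1 - c2| * ‖A‖ ≤ c2 * ‖A - B‖ := by
    have h1 : c1 - c2 = (Real.sqrt Zw - Real.sqrt Zv) / (Real.sqrt Zv * Real.sqrt Zw) := by
      rw [hc1, hc2]; field_simp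
    have h2 : |c1 - c2| = |Real.sqrt Zw - Real.sqrt Zv| / (Real.sqrt Zv * Real.sqrt Zw) := by
      rw [h1, abs_div, abs_of_pos (mul_pos hsZv hsZw)]
    have h3 : |Real.sqrt Zw - Real.sqrt Zv| ≤ ‖A - B‖ := by
      rw [← hnA, ← hnB, abs_sub_comm]
      exact abs_norm_sub_norm_le A B
    rw [h2, hnA]
    rw [div_mul_eq_mul_div]
    rw [div_le_iff₀ (mul_pos hsZv hsZw)]
    calc |Real.sqrt Zw - Real.sqrt Zv| * Real.sqrt Zv
        ≤ ‖A - B‖ * Real.sqrt Zv := by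
          apply mul_le_mul_of_nonneg_right h3 (le_of_lt hsZv)
      _ = c2 * ‖A - B‖ * (Real.sqrt Zv * Real.sqrt Zw) := by
          rw [hc2,
            show (Real.sqrt Zw)⁻¹ * ‖A - B‖ * (Real.sqrt Zv * Real.sqrt Zw)
                = ‖A - B‖ * Real.sqrt Zv * ((Real.sqrt Zw)⁻¹ * Real.sqrt Zw) from by ring,
            inv_mul_cancel₀ (ne_of_gt hsZw), mul_one]
  calc ‖c1 • A - c2 • B‖ ≤ c2 * ‖A - B‖ + |c1 - c2| * ‖A‖ := htri
    _ ≤ c2 * ‖A - B‖ + c2 * ‖A - B‖ := by linarith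
    _ = 2 * c2 * ‖A - B‖ := by ring
    _ ≤ 2 * c2 * (K * Real.sqrt Zw) := by
        apply mul_le_mul_of_nonneg_left hABle (by linarith)
    _ = M * Real.exp (M / 2) := by
        rw [hc2, hK,
          show 2 * (Real.sqrt Zw)⁻¹ * (M / 2 * Real.exp (M / 2) * Real.sqrt Zw)
              = M * Real.exp (M / 2) * ((Real.sqrt Zw)⁻¹ * Real.sqrt Zw) from by ring,
          inv_mul_cancel₀ (ne_of_gt hsZw), mul_one]
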